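/- The α-reciprocal sequence of any sequence of complex p×q matrices is first-term dominant: Ran(s_j^{♯,α}) ⊆ Ran(s_0^{†}) = (ker s_0)^{⊥} and (Ran s_0)^{⊥} ⊆ ker(s_j^{♯,α}) for all 0 ≤ j ≤ κ. In particular (s_j^{♯,α})_{j=0}^{κ} belongs to D_{q×p,κ}. -/

import Mathlib

open Matrix BigOperators

def IsMP {m n : Type*} [Fintype m] [Fintype n] (A : Matrix m n ℂ) (B : Matrix n m ℂ) : Prop :=
  A * B * A = A ∧ B * A * B = B ∧ (A * B)ᴴ = A * B ∧ (B * A)ᴴ = B * A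

open Classical in
noncomputable def mp {m n : Type*} [Fintype m] [Fintype n] (A : Matrix m n ℂ) : Matrix n m ℂ :=
  if h : ∃ B, IsMP A B then h.choose else 0

noncomputable def recip {p q : ℕ} (s : ℕ → Matrix (Fin p) (Fin q) ℂ) :
    ℕ → Matrix (Fin q) (Fin p) ℂ
  | 0 => mp (s 0)
  | (j+1) => -(mp (s 0) * ∑ l : Fin (j+1), s (j+1 - l.val) * recip s l.val)
termination_by j => j
decreasing_by exact l.isLt

noncomputable def shiftA {p q : ℕ} (α : ℂ) (s : ℕ → Matrix (Fin p) (Fin q) ℂ) :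
    ℕ → Matrix (Fin p) (Fin q) ℂ
  | 0 => s 0
  | (j+1) => (-α) • s j + s (j+1)

noncomputable def recipA {p q : ℕ} (α : ℂ) (s : ℕ → Matrix (Fin p) (Fin q) ℂ) :
    ℕ → Matrix (Fin q) (Fin p) ℂ :=
  recip (shiftA α s)

/-- α-reciprocal sequence defined via the sum formula (as in the context). -/
noncomputable def recipASum {p q : ℕ} (α : ℂ) (s : ℕ → Matrix (Fin p) (Fin q) ℂ) :
    ℕ → Matrix (Fin q) (Fin p) ℂ :=
  fun j => ∑ l ∈ Finset.range (j + 1), α ^ (j - l) • recip s l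

/-- first-term dominance of a matrix sequence up to κ. -/
def FTD {a b : ℕ} (κ : ℕ∞) (t : ℕ → Matrix (Fin a) (Fin b) ℂ) : Prop :=
  ∀ j : ℕ, (j : ℕ∞) ≤ κ →
    LinearMap.ker (Matrix.toEuclideanLin (t 0)) ≤ LinearMap.ker (Matrix.toEuclideanLin (t j)) ∧
    LinearMap.range (Matrix.toEuclideanLin (t j)) ≤ LinearMap.range (Matrix.toEuclideanLin (t 0))

section MP
variable {E F : Type*} [NormedAddCommGroup E] [InnerProductSpace ℂ E]
  [NormedAddCommGroup F] [InnerProductSpace ℂ F]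
  [FiniteDimensional ℂ E] [FiniteDimensional ℂ F]

local notation "⟪" x ", " y "⟫" => @inner ℂ _ _ x y

lemma exists_mp_linmap (f : E →ₗ[ℂ] F) : ∃ g : F →ₗ[ℂ] E,
    f ∘ₗ g ∘ₗ f = f ∧ g ∘ₗ f ∘ₗ g = g ∧
    LinearMap.adjoint (f ∘ₗ g) = f ∘ₗ g ∧ LinearMap.adjoint (g ∘ₗ f) = g ∘ₗ f := by
  classical
  set K := (LinearMap.ker f)ᗮ with hK
  set R := LinearMap.range f with hR
  set f' : K →ₗ[ℂ] R := LinearMap.codRestrict R (f ∘ₗ K.subtype)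
    (fun c => ⟨(c : E), rfl⟩) with hf'
  have hinj : Function.Injective f' := by
    intro x y hxy
    have hx : f (x : E) = f (y : E) := congrArg Subtype.val hxy
    have hker : ((x : E) - (y : E)) ∈ LinearMap.ker f := by
      simp [LinearMap.mem_ker, map_sub, hx]
    have hKmem : ((x : E) - (y : E)) ∈ K := sub_mem x.2 y.2
    have h0 : ⟪(x:E) - (y:E), (x:E)-(y:E)⟫ = 0 :=
      (Submodule.mem_orthogonal _ _).mp hKmem _ hker
    exact Subtype.ext (sub_eq_zero.mp (inner_self_eq_zero.mp h0))
  have hsurj : Function.Surjective f' := by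
    rintro ⟨y, hy⟩
    obtain ⟨x, rfl⟩ := hy
    obtain ⟨n, hn, k, hk, hx⟩ := Submodule.exists_add_mem_mem_orthogonal (K := LinearMap.ker f) x
    refine ⟨⟨k, hk⟩, ?_⟩
    apply Subtype.ext
    have hfx : f x = f k := by
      rw [hx, map_add, LinearMap.mem_ker.mp hn, zero_add]
    exact hfx.symm
  set e : K ≃ₗ[ℂ] R := LinearEquiv.ofBijective f' ⟨hinj, hsurj⟩ with he
  set g : F →ₗ[ℂ] E := K.subtype ∘ₗ (e.symm : R →ₗ[ℂ] K) ∘ₗ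
    (Submodule.orthogonalProjectionOnto R : F →L[ℂ] R).toLinearMap with hg
  have hfe : ∀ z : R, f ((e.symm z : K) : E) = (z : F) := by
    intro z
    have h1 : f' (e.symm z) = z := by
      have := e.apply_symm_apply z
      exact this
    exact congrArg Subtype.val h1
  have hfg : ∀ y : F, f (g y) = (Submodule.orthogonalProjectionOnto R y : F) := fun y => hfe _
  have hgf : ∀ x : E, g (f x) ∈ K ∧ x - g (f x) ∈ LinearMap.ker f := by
    intro x
    obtain ⟨n, hn, k, hk, hx⟩ := Submodule.exists_add_mem_mem_orthogonal (K := LinearMap.ker f) x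
    have hfx : f x = f k := by rw [hx, map_add, LinearMap.mem_ker.mp hn, zero_add]
    have hek : e ⟨k, hk⟩ = ⟨f x, LinearMap.mem_range_self f x⟩ := by
      apply Subtype.ext
      exact hfx.symm
    have h1 : Submodule.orthogonalProjectionOnto R (f x) = ⟨f x, LinearMap.mem_range_self f x⟩ :=
      Submodule.orthogonalProjectionOnto_mem_subspace_eq_self (⟨f x, LinearMap.mem_range_self f x⟩ : R)
    have hgfx : g (f x) = k := by
      have h2 : g (f x) = ((e.symm (Submodule.orthogonalProjectionOnto R (f x)) : K) : E) := rfl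
      rw [h2, h1, ← hek, e.symm_apply_apply]
    constructor
    · rw [hgfx]; exact hk
    · rw [hgfx, hx]; simpa using hn
  refine ⟨g, ?_, ?_, ?_, ?_⟩
  · ext x
    obtain ⟨-, hn⟩ := hgf x
    have h0 : f x - f (g (f x)) = 0 := by
      rw [← map_sub]; exact LinearMap.mem_ker.mp hn
    simpa only [LinearMap.comp_apply] using (sub_eq_zero.mp h0).symm
  · ext y
    simp only [LinearMap.comp_apply]
    rw [hfg y]
    have h2 : Submodule.orthogonalProjectionOnto R ((Submodule.orthogonalProjectionOnto R y : F)) =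
        Submodule.orthogonalProjectionOnto R y := Submodule.orthogonalProjectionOnto_mem_subspace_eq_self _
    exact congrArg (fun z => ((e.symm z : K) : E)) h2
  · have hsym : (f ∘ₗ g).IsSymmetric := by
      intro x y
      simp only [LinearMap.comp_apply, hfg]
      exact Submodule.inner_starProjection_left_eq_right R x y
    rw [← LinearMap.star_eq_adjoint]
    exact (LinearMap.isSymmetric_iff_isSelfAdjoint (f ∘ₗ g)).mp hsym
  · have hsym : (g ∘ₗ f).IsSymmetric := by
      intro x y
      simp only [LinearMap.comp_apply]
      obtain ⟨hkx, hnx⟩ := hgf x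
      obtain ⟨hky, hny⟩ := hgf y
      have hnx' : x - g (f x) ∈ Kᗮ := Submodule.le_orthogonal_orthogonal _ hnx
      have hny' : y - g (f y) ∈ Kᗮ := Submodule.le_orthogonal_orthogonal _ hny
      have e1 : ⟪g (f x), y - g (f y)⟫ = 0 :=
        (Submodule.mem_orthogonal _ _).mp hny' _ hkx
      have e2 : ⟪x - g (f x), g (f y)⟫ = 0 :=
        (Submodule.mem_orthogonal' _ _).mp hnx' _ hky
      have d1 : ⟪g (f x), y⟫ = ⟪g (f x), g (f y)⟫ := by
        have := inner_sub_right (𝕜 := ℂ) (g (f x)) y (g (f y))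
        rw [e1] at this; linear_combination -this
      have d2 : ⟪x, g (f y)⟫ = ⟪g (f x), g (f y)⟫ := by
        have := inner_sub_left (𝕜 := ℂ) x (g (f x)) (g (f y))
        rw [e2] at this; linear_combination -this
      rw [d1, d2]
    rw [← LinearMap.star_eq_adjoint]
    exact (LinearMap.isSymmetric_iff_isSelfAdjoint (g ∘ₗ f)).mp hsym

end MP


section Mats

local notation "⟪" x ", " y "⟫" => @inner ℂ _ _ x y

lemma toEuclideanLin_mul {a b c : ℕ} (M : Matrix (Fin a) (Fin b) ℂ) (N : Matrix (Fin b) (Fin c) ℂ) :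
    Matrix.toEuclideanLin (M * N) = Matrix.toEuclideanLin M ∘ₗ Matrix.toEuclideanLin N := by
  apply LinearMap.ext; intro v
  simp [Matrix.toEuclideanLin_apply, Matrix.mulVec_mulVec]

lemma exists_isMP {a b : ℕ} (A : Matrix (Fin a) (Fin b) ℂ) : ∃ B, IsMP A B := by
  obtain ⟨g, h1, h2, h3, h4⟩ := exists_mp_linmap (Matrix.toEuclideanLin A)
  refine ⟨Matrix.toEuclideanLin.symm g, ?_, ?_, ?_, ?_⟩
  · apply Matrix.toEuclideanLin.injective
    rw [toEuclideanLin_mul, toEuclideanLin_mul, LinearEquiv.apply_symm_apply,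
      LinearMap.comp_assoc]
    exact h1
  · apply Matrix.toEuclideanLin.injective
    rw [toEuclideanLin_mul, toEuclideanLin_mul, LinearEquiv.apply_symm_apply,
      LinearMap.comp_assoc]
    exact h2
  · apply Matrix.toEuclideanLin.injective
    rw [Matrix.toEuclideanLin_conjTranspose_eq_adjoint, toEuclideanLin_mul,
      LinearEquiv.apply_symm_apply]
    exact h3
  · apply Matrix.toEuclideanLin.injective
    rw [Matrix.toEuclideanLin_conjTranspose_eq_adjoint, toEuclideanLin_mul,
      LinearEquiv.apply_symm_apply]
    exact h4

lemma mp_isMP {a b : ℕ} (A : Matrix (Fin a) (Fin b) ℂ) : IsMP A (mp A) := by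
  have hex := exists_isMP A
  unfold mp
  rw [dif_pos hex]
  exact hex.choose_spec

lemma recip_zero {p q : ℕ} (s : ℕ → Matrix (Fin p) (Fin q) ℂ) : recip s 0 = mp (s 0) := by
  rw [recip]

lemma recip_succ {p q : ℕ} (s : ℕ → Matrix (Fin p) (Fin q) ℂ) (j : ℕ) :
    recip s (j+1) = -(mp (s 0) * ∑ l : Fin (j+1), s (j+1 - l.val) * recip s l.val) := by
  rw [recip]

lemma recip_factor {p q : ℕ} (s : ℕ → Matrix (Fin p) (Fin q) ℂ) (l : ℕ) :
    ∃ C : Matrix (Fin p) (Fin p) ℂ, recip s l = mp (s 0) * C := by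
  cases l with
  | zero =>
    refine ⟨s 0 * mp (s 0), ?_⟩
    rw [recip_zero]
    conv_rhs => rw [← Matrix.mul_assoc, (mp_isMP (s 0)).2.1]
  | succ j =>
    exact ⟨-(∑ l : Fin (j+1), s (j+1 - l.val) * recip s l.val),
      by rw [recip_succ, Matrix.mul_neg]⟩

lemma mp_range_le {p q : ℕ} (s : ℕ → Matrix (Fin p) (Fin q) ℂ) :
    LinearMap.range (Matrix.toEuclideanLin (mp (s 0))) ≤
      (LinearMap.ker (Matrix.toEuclideanLin (s 0)))ᗮ := by
  have h := mp_isMP (s 0)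
  have hB : mp (s 0) = (s 0)ᴴ * ((mp (s 0))ᴴ * mp (s 0)) := by
    calc mp (s 0) = mp (s 0) * s 0 * mp (s 0) := h.2.1.symm
    _ = (mp (s 0) * s 0)ᴴ * mp (s 0) := by rw [h.2.2.2]
    _ = (s 0)ᴴ * (mp (s 0))ᴴ * mp (s 0) := by rw [Matrix.conjTranspose_mul]
    _ = (s 0)ᴴ * ((mp (s 0))ᴴ * mp (s 0)) := Matrix.mul_assoc _ _ _
  rintro v ⟨w, rfl⟩
  rw [Submodule.mem_orthogonal]
  intro u hu
  have hw : Matrix.toEuclideanLin (mp (s 0)) w =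
      LinearMap.adjoint (Matrix.toEuclideanLin (s 0))
        (Matrix.toEuclideanLin ((mp (s 0))ᴴ * mp (s 0)) w) := by
    conv_lhs => rw [hB]
    rw [toEuclideanLin_mul, Matrix.toEuclideanLin_conjTranspose_eq_adjoint]
    rfl
  rw [hw, LinearMap.adjoint_inner_right, LinearMap.mem_ker.mp hu, inner_zero_left]

lemma mp_ker_le {p q : ℕ} (s : ℕ → Matrix (Fin p) (Fin q) ℂ) :
    LinearMap.ker (Matrix.toEuclideanLin (mp (s 0))) ≤
      (LinearMap.range (Matrix.toEuclideanLin (s 0)))ᗮ := by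
  have h := mp_isMP (s 0)
  have hA : (s 0)ᴴ = ((s 0)ᴴ * s 0) * mp (s 0) := by
    calc (s 0)ᴴ = (s 0 * mp (s 0) * s 0)ᴴ := by rw [h.1]
    _ = (s 0)ᴴ * (s 0 * mp (s 0))ᴴ := Matrix.conjTranspose_mul _ _
    _ = (s 0)ᴴ * (s 0 * mp (s 0)) := by rw [h.2.2.1]
    _ = ((s 0)ᴴ * s 0) * mp (s 0) := (Matrix.mul_assoc _ _ _).symm
  intro v hv
  have hadj : LinearMap.adjoint (Matrix.toEuclideanLin (s 0)) v = 0 := by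
    rw [← Matrix.toEuclideanLin_conjTranspose_eq_adjoint]
    conv_lhs => rw [hA]
    rw [toEuclideanLin_mul, LinearMap.comp_apply, LinearMap.mem_ker.mp hv, map_zero]
  rw [Submodule.mem_orthogonal']
  rintro u ⟨x, rfl⟩
  rw [← LinearMap.adjoint_inner_left, hadj, inner_zero_left]

lemma adjoint_zero_of_orth {p q : ℕ} (A : Matrix (Fin p) (Fin q) ℂ)
    (v : EuclideanSpace ℂ (Fin p))
    (hv : v ∈ (LinearMap.range (Matrix.toEuclideanLin A))ᗮ) :
    LinearMap.adjoint (Matrix.toEuclideanLin A) v = 0 := by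
  rw [← inner_self_eq_zero (𝕜 := ℂ)]
  rw [LinearMap.adjoint_inner_left]
  exact (Submodule.mem_orthogonal' _ _).mp hv _ (LinearMap.mem_range_self _ _)

lemma recip_apply_orth {p q : ℕ} (s : ℕ → Matrix (Fin p) (Fin q) ℂ) (l : ℕ) :
    ∀ v ∈ (LinearMap.range (Matrix.toEuclideanLin (s 0)))ᗮ,
      Matrix.toEuclideanLin (recip s l) v = 0 := by
  induction l using Nat.strong_induction_on with
  | _ l ih =>
    intro v hv
    cases l with
    | zero =>
      have h := mp_isMP (s 0)
      have hB : mp (s 0) = (mp (s 0) * (mp (s 0))ᴴ) * (s 0)ᴴ := by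
        calc mp (s 0) = mp (s 0) * s 0 * mp (s 0) := h.2.1.symm
        _ = mp (s 0) * (s 0 * mp (s 0)) := Matrix.mul_assoc _ _ _
        _ = mp (s 0) * (s 0 * mp (s 0))ᴴ := by rw [h.2.2.1]
        _ = mp (s 0) * ((mp (s 0))ᴴ * (s 0)ᴴ) := by rw [Matrix.conjTranspose_mul]
        _ = (mp (s 0) * (mp (s 0))ᴴ) * (s 0)ᴴ := (Matrix.mul_assoc _ _ _).symm
      rw [recip_zero]
      conv_lhs => rw [hB]
      rw [toEuclideanLin_mul, LinearMap.comp_apply,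
        Matrix.toEuclideanLin_conjTranspose_eq_adjoint,
        adjoint_zero_of_orth (s 0) v hv, map_zero]
    | succ j =>
      rw [recip_succ, map_neg, LinearMap.neg_apply, toEuclideanLin_mul, LinearMap.comp_apply]
      have hS : Matrix.toEuclideanLin
          (∑ l : Fin (j+1), s (j+1 - l.val) * recip s l.val) v = 0 := by
        rw [map_sum, LinearMap.sum_apply]
        refine Finset.sum_eq_zero fun l _ => ?_
        rw [toEuclideanLin_mul, LinearMap.comp_apply, ih l.val l.isLt v hv, map_zero]
      rw [hS, map_zero, neg_zero]

end Mats


/-- The α-reciprocal sequence is first-term dominant: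
    Ran(s_j^{♯,α}) ⊆ (ker s_0)^⊥ and (Ran s_0)^⊥ ⊆ ker(s_j^{♯,α}) for all j ≤ κ;
    in particular it belongs to D_{q×p,κ}. -/
theorem stmt3 {p q : ℕ} (α : ℂ) (κ : ℕ∞) (s : ℕ → Matrix (Fin p) (Fin q) ℂ) :
    (∀ j : ℕ, (j : ℕ∞) ≤ κ →
      LinearMap.range (Matrix.toEuclideanLin (recipASum α s j)) ≤
        (LinearMap.ker (Matrix.toEuclideanLin (s 0)))ᗮ ∧
      (LinearMap.range (Matrix.toEuclideanLin (s 0)))ᗮ ≤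
        LinearMap.ker (Matrix.toEuclideanLin (recipASum α s j))) ∧
    FTD κ (recipASum α s) := by
  classical
  choose C hC using recip_factor s
  have hsum : ∀ j, recipASum α s j =
      mp (s 0) * (∑ l ∈ Finset.range (j+1), α ^ (j-l) • C l) := by
    intro j
    rw [recipASum, Matrix.mul_sum]
    refine Finset.sum_congr rfl fun l _ => ?_
    rw [hC l, Matrix.mul_smul]
  have hrange : ∀ j, LinearMap.range (Matrix.toEuclideanLin (recipASum α s j)) ≤
      LinearMap.range (Matrix.toEuclideanLin (mp (s 0))) := by
    intro j
    rw [hsum j, toEuclideanLin_mul]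
    exact LinearMap.range_comp_le_range _ _
  have hker : ∀ j, (LinearMap.range (Matrix.toEuclideanLin (s 0)))ᗮ ≤
      LinearMap.ker (Matrix.toEuclideanLin (recipASum α s j)) := by
    intro j v hv
    rw [LinearMap.mem_ker, recipASum, map_sum, LinearMap.sum_apply]
    refine Finset.sum_eq_zero fun l _ => ?_
    rw [_root_.map_smul, LinearMap.smul_apply, recip_apply_orth s l v hv, smul_zero]
  have h0 : recipASum α s 0 = mp (s 0) := by
    rw [recipASum]
    simp [Finset.sum_range_one, recip_zero]
  refine ⟨fun j _ => ⟨le_trans (hrange j) (mp_range_le s), hker j⟩, ?_⟩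
  intro j _
  constructor
  · rw [h0]
    exact le_trans (mp_ker_le s) (hker j)
  · rw [h0]
    exact hrange j
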